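/- Let G be a non-trivial n-player game, i.e. there exist a player i, strategies k ≠ l in Fin (d i), and a profile s with s i = k such that X i s ≠ X i (Function.update s i l). Suppose the correlated equilibrium polytope P_G has maximal dimension D − 1, where D = ∏_i d i. Then every Nash equilibrium of G — every p ∈ P_G such that p s = ∏_i a_i (s i) for some probability vectors a_i : Fin (d i) → ℝ (a_i ≥ 0, ∑ a_i = 1) — lies on the relative boundary of P_G; i.e. no such p belongs to the intrinsic interior of P_G. -/
import Mathlib
set_option maxHeartbeats 2000000

/-- The correlated equilibrium polytope of an `n`-player game. -/
def CorrelatedEqPolytope {n : ℕ} (d : Fin n → ℕ)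
    (X : (i : Fin n) → ((j : Fin n) → Fin (d j)) → ℝ) :
    Set (((j : Fin n) → Fin (d j)) → ℝ) :=
  {p | (∀ s, 0 ≤ p s) ∧ (∑ s, p s = 1) ∧
    ∀ (i : Fin n) (k l : Fin (d i)),
      0 ≤ ∑ s ∈ Finset.univ.filter (fun s => s i = k),
        (X i s - X i (Function.update s i l)) * p s}

/-- Auxiliary: if some incentive constraint with a nonzero coefficient is tight at `p`,
then `p` is not in the intrinsic interior of a maximal-dimensional correlated
equilibrium polytope. -/
theorem aux_not_interior
    {n : ℕ} (d : Fin n → ℕ) (hd : ∀ i, 1 ≤ d i)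
    (X : (i : Fin n) → ((j : Fin n) → Fin (d j)) → ℝ)
    (hdim : Module.finrank ℝ (affineSpan ℝ (CorrelatedEqPolytope d X)).direction
      = (∏ i, d i) - 1)
    (i : Fin n) (k l : Fin (d i)) (hkl : k ≠ l)
    (p : ((j : Fin n) → Fin (d j)) → ℝ)
    (s₀ : (j : Fin n) → Fin (d j)) (hs₀ : s₀ i = k)
    (hc : X i s₀ - X i (Function.update s₀ i l) ≠ 0)
    (hF : ∑ s ∈ Finset.univ.filter (fun s => s i = k),
        (X i s - X i (Function.update s i l)) * p s = 0) :
    p ∉ intrinsicInterior ℝ (CorrelatedEqPolytope d X) := by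
  classical
  intro hmem
  set P := CorrelatedEqPolytope d X with hP
  set c : ((j : Fin n) → Fin (d j)) → ℝ := fun s => X i s - X i (Function.update s i l) with hcdef
  set filt := Finset.univ.filter (fun s : (j : Fin n) → Fin (d j) => s i = k) with hfilt
  -- the "total mass" linear functional
  set σ : (((j : Fin n) → Fin (d j)) → ℝ) →ₗ[ℝ] ℝ :=
    { toFun := fun q => ∑ s, q s
      map_add' := fun x y => by simp [Finset.sum_add_distrib]
      map_smul' := fun m x => by simp [Finset.mul_sum] } with hσ
  have hle : (affineSpan ℝ P).direction ≤ LinearMap.ker σ := by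
    rw [direction_affineSpan, vectorSpan_def]
    refine Submodule.span_le.2 ?_
    rintro v ⟨q, hq, q', hq', rfl⟩
    simp only [LinearMap.mem_ker, SetLike.mem_coe, vsub_eq_sub, map_sub]
    have h1 : σ q = 1 := hq.2.1
    have h2 : σ q' = 1 := hq'.2.1
    rw [h1, h2, sub_self]
  have hne : Nonempty ((j : Fin n) → Fin (d j)) := ⟨fun j => ⟨0, hd j⟩⟩
  obtain ⟨sArb⟩ := hne
  have hσsurj : Function.Surjective σ := by
    intro r
    refine ⟨Pi.single sArb r, ?_⟩
    simp [hσ, Pi.single_apply]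
  have hcard : Fintype.card ((j : Fin n) → Fin (d j)) = ∏ i, d i := by
    simp [Fintype.card_pi]
  have hker : Module.finrank ℝ (LinearMap.ker σ) = (∏ i, d i) - 1 := by
    have h1 := LinearMap.finrank_range_add_finrank_ker σ
    rw [LinearMap.range_eq_top.2 hσsurj] at h1
    rw [finrank_top, Module.finrank_self, Module.finrank_pi, hcard] at h1
    have hD : 1 ≤ ∏ i, d i := Finset.one_le_prod' (fun i _ => hd i)
    omega
  have hdir : (affineSpan ℝ P).direction = LinearMap.ker σ :=
    Submodule.eq_of_le_of_finrank_eq hle (by rw [hdim, hker])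
  set t := Function.update s₀ i l with ht
  have hti : t i = l := Function.update_self i l s₀
  set v : ((j : Fin n) → Fin (d j)) → ℝ :=
    fun s => (if s = s₀ then (1:ℝ) else 0) - (if s = t then (1:ℝ) else 0) with hv
  have hσv : σ v = 0 := by
    simp [hσ, hv, Finset.sum_sub_distrib]
  have hvdir : v ∈ (affineSpan ℝ P).direction := by
    rw [hdir]; exact LinearMap.mem_ker.2 hσv
  have hpspan : p ∈ affineSpan ℝ P := subset_affineSpan ℝ P (intrinsicInterior_subset hmem)
  have hmemspan : ∀ τ : ℝ, p + τ • v ∈ affineSpan ℝ P := by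
    intro τ
    have h := AffineSubspace.vadd_mem_of_mem_direction
      (Submodule.smul_mem _ τ hvdir) hpspan
    simpa [vadd_eq_add, add_comm] using h
  set g : ℝ → (affineSpan ℝ P) := fun τ => ⟨p + τ • v, hmemspan τ⟩ with hg
  have hgc : Continuous g := by
    apply Continuous.subtype_mk
    fun_prop
  obtain ⟨x, hx, hxp⟩ := hmem
  have hg0 : g 0 = x := by
    apply Subtype.ext
    simp [hg, hxp]
  have hopen : IsOpen (g ⁻¹' interior ((↑) ⁻¹' P)) := isOpen_interior.preimage hgc
  have h0mem : (0:ℝ) ∈ g ⁻¹' interior ((↑) ⁻¹' P) := by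
    rw [Set.mem_preimage, hg0]; exact hx
  obtain ⟨ε, hε, hball⟩ := Metric.isOpen_iff.1 hopen 0 h0mem
  have key : ∀ τ : ℝ, |τ| < ε → p + τ • v ∈ P := by
    intro τ hτ
    have h1 : τ ∈ Metric.ball (0:ℝ) ε := by simpa [Real.dist_eq] using hτ
    have h2 : g τ ∈ interior ((↑) ⁻¹' P) := hball h1
    have h3 : g τ ∈ ((↑) ⁻¹' P : Set (affineSpan ℝ P)) := interior_subset h2
    exact h3
  have hs₀mem : s₀ ∈ filt := Finset.mem_filter.2 ⟨Finset.mem_univ _, hs₀⟩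
  have htmem : t ∉ filt := by
    simp only [hfilt, Finset.mem_filter, Finset.mem_univ, true_and, hti]
    exact fun h => hkl h.symm
  have hFv : ∑ s ∈ filt, c s * v s = c s₀ := by
    simp only [hv, mul_sub, mul_ite, mul_one, mul_zero, Finset.sum_sub_distrib,
      Finset.sum_ite_eq' filt, if_pos hs₀mem, if_neg htmem, sub_zero]
  have hτc : ∀ τ : ℝ, |τ| < ε → 0 ≤ τ * c s₀ := by
    intro τ hτ
    have hmem' := (key τ hτ).2.2 i k l
    have hexp : ∑ s ∈ filt, (X i s - X i (Function.update s i l)) * (p + τ • v) s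
        = (∑ s ∈ filt, (X i s - X i (Function.update s i l)) * p s)
          + τ * ∑ s ∈ filt, c s * v s := by
      rw [Finset.mul_sum, ← Finset.sum_add_distrib]
      refine Finset.sum_congr rfl fun s hs => ?_
      have h1 : (p + τ • v) s = p s + τ * v s := rfl
      rw [h1, hcdef]
      ring
    rw [hexp, hF, hFv, zero_add] at hmem'
    exact hmem'
  have h1 := hτc (ε/2) (by rw [abs_of_pos] <;> linarith)
  have h2 := hτc (-(ε/2)) (by rw [abs_neg, abs_of_pos] <;> linarith)
  have hc0 : c s₀ = 0 := by
    rcases lt_trichotomy (c s₀) 0 with h|h|h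
    · nlinarith [mul_pos (half_pos hε) (neg_pos.2 h)]
    · exact h
    · nlinarith [mul_pos (half_pos hε) h]
  exact hc hc0

/-- Auxiliary reindexing: the `(l,k)` constraint expression on the reduced product
is the negative of the `(k,l)` one. -/
theorem sum_reindex_neg
    {n : ℕ} {d : Fin n → ℕ} {X : (i : Fin n) → ((j : Fin n) → Fin (d j)) → ℝ}
    (i : Fin n) (k l : Fin (d i)) (a : (i : Fin n) → Fin (d i) → ℝ)
    (Q : ((j : Fin n) → Fin (d j)) → ℝ)
    (hQ : Q = fun s => ∏ j ∈ Finset.univ.erase i, a j (s j)) :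
    ∑ s ∈ Finset.univ.filter (fun s => s i = l),
        (X i s - X i (Function.update s i k)) * Q s
      = -∑ s ∈ Finset.univ.filter (fun s => s i = k),
        (X i s - X i (Function.update s i l)) * Q s := by
  classical
  rw [← Finset.sum_neg_distrib]
  refine Finset.sum_bij' (fun t _ => Function.update t i k)
    (fun s _ => Function.update s i l) ?_ ?_ ?_ ?_ ?_
  · intro t ht
    simp [Function.update_self]
  · intro s hs
    simp [Function.update_self]
  · intro t ht
    have htl : t i = l := (Finset.mem_filter.1 ht).2
    show Function.update (Function.update t i k) i l = t
    rw [Function.update_idem, ← htl, Function.update_eq_self]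
  · intro s hs
    have hsk : s i = k := (Finset.mem_filter.1 hs).2
    show Function.update (Function.update s i l) i k = s
    rw [Function.update_idem, ← hsk, Function.update_eq_self]
  · intro t ht
    have htl : t i = l := (Finset.mem_filter.1 ht).2
    have e1 : Function.update (Function.update t i k) i l = t := by
      rw [Function.update_idem, ← htl, Function.update_eq_self]
    have e2 : Q (Function.update t i k) = Q t := by
      rw [hQ]
      refine Finset.prod_congr rfl fun j hj => ?_
      rw [Function.update_of_ne (Finset.ne_of_mem_erase hj)]
    rw [e1, e2]
    ring

/-- For a non-trivial game whose correlated equilibrium polytope has maximal dimension,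
every Nash equilibrium lies on the relative boundary of the polytope. -/
theorem nash_not_mem_intrinsicInterior_of_maximal_dim
    {n : ℕ} (d : Fin n → ℕ) (hd : ∀ i, 1 ≤ d i)
    (X : (i : Fin n) → ((j : Fin n) → Fin (d j)) → ℝ)
    (hnontriv : ∃ (i : Fin n) (k l : Fin (d i)), k ≠ l ∧
      ∃ s : (j : Fin n) → Fin (d j), s i = k ∧ X i s ≠ X i (Function.update s i l))
    (hdim : Module.finrank ℝ (affineSpan ℝ (CorrelatedEqPolytope d X)).direction
      = (∏ i, d i) - 1) :
    ∀ p ∈ CorrelatedEqPolytope d X,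
      (∃ a : (i : Fin n) → Fin (d i) → ℝ,
        (∀ i j, 0 ≤ a i j) ∧ (∀ i, ∑ j, a i j = 1) ∧
        ∀ s : (j : Fin n) → Fin (d j), p s = ∏ i, a i (s i)) →
      p ∉ intrinsicInterior ℝ (CorrelatedEqPolytope d X) := by
  classical
  rintro p hp ⟨a, ha0, ha1, hpa⟩
  obtain ⟨i, k, l, hkl, s₀, hs₀, hX⟩ := hnontriv
  set Q : ((j : Fin n) → Fin (d j)) → ℝ :=
    fun s => ∏ j ∈ Finset.univ.erase i, a j (s j) with hQ
  set A : ℝ := ∑ s ∈ Finset.univ.filter (fun s : (j : Fin n) → Fin (d j) => s i = k),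
      (X i s - X i (Function.update s i l)) * Q s with hA
  have hprod : ∀ s : (j : Fin n) → Fin (d j), p s = a i (s i) * Q s := by
    intro s
    rw [hpa s]
    exact (Finset.mul_prod_erase Finset.univ (fun j => a j (s j)) (Finset.mem_univ i)).symm
  have hfp : ∑ s ∈ Finset.univ.filter (fun s : (j : Fin n) → Fin (d j) => s i = k),
      (X i s - X i (Function.update s i l)) * p s = a i k * A := by
    rw [hA, Finset.mul_sum]
    refine Finset.sum_congr rfl fun s hs => ?_
    have hsk : s i = k := (Finset.mem_filter.1 hs).2
    rw [hprod s, hsk]; ring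
  have hB : ∑ s ∈ Finset.univ.filter (fun s : (j : Fin n) → Fin (d j) => s i = l),
      (X i s - X i (Function.update s i k)) * Q s = -A := by
    rw [hA]
    exact sum_reindex_neg i k l a Q hQ
  have hgp : ∑ s ∈ Finset.univ.filter (fun s : (j : Fin n) → Fin (d j) => s i = l),
      (X i s - X i (Function.update s i k)) * p s = a i l * (-A) := by
    rw [← hB, Finset.mul_sum]
    refine Finset.sum_congr rfl fun s hs => ?_
    have hsl : s i = l := (Finset.mem_filter.1 hs).2
    rw [hprod s, hsl]; ring
  have hcon1 : 0 ≤ a i k * A := by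
    have := hp.2.2 i k l
    rwa [hfp] at this
  have hcon2 : 0 ≤ a i l * (-A) := by
    have := hp.2.2 i l k
    rwa [hgp] at this
  have hdisj : a i k * A = 0 ∨ a i l * (-A) = 0 := by
    by_contra hcontra
    push_neg at hcontra
    obtain ⟨h1, h2⟩ := hcontra
    have hk' : 0 < a i k * A := lt_of_le_of_ne hcon1 (Ne.symm h1)
    have hl' : 0 < a i l * (-A) := lt_of_le_of_ne hcon2 (Ne.symm h2)
    have hApos : 0 < A := by
      rcases mul_pos_iff.1 hk' with ⟨_, h⟩ | ⟨h, _⟩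
      · exact h
      · exact absurd h (not_lt.2 (ha0 i k))
    have hAneg : 0 < -A := by
      rcases mul_pos_iff.1 hl' with ⟨_, h⟩ | ⟨h, _⟩
      · exact h
      · exact absurd h (not_lt.2 (ha0 i l))
    linarith
  rcases hdisj with h | h
  · exact aux_not_interior d hd X hdim i k l hkl p s₀ hs₀
      (sub_ne_zero.2 hX) (hfp.trans h)
  · have e : Function.update (Function.update s₀ i l) i k = s₀ := by
      rw [Function.update_idem, ← hs₀, Function.update_eq_self]
    have hc' : X i (Function.update s₀ i l)
        - X i (Function.update (Function.update s₀ i l) i k) ≠ 0 := by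
      rw [e]
      intro hz
      exact hX (sub_eq_zero.1 hz).symm
    exact aux_not_interior d hd X hdim i l k hkl.symm p (Function.update s₀ i l)
      (Function.update_self i l s₀) hc' (hgp.trans h)
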